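/- For an n-vertex graph G with adjacency matrix A and bitstrings h, g, k, l ∈ {0,1}^n, the matrix element ⟨h| X^k Z^l |g⟩ between graph basis states equals (-1)^{h·k + σ(A,k)} if A·k + l = h + g (over Z_2), and equals 0 otherwise. -/

import Mathlib

open Finset

/-- The `n`-qubit state space, written as amplitude functions on computational basis
labels `{0,1}^n`. -/
abbrev QState (n : ℕ) := (Fin n → ZMod 2) → ℂ

/-- The Pauli operator `Z^h = ⊗_i Z_i^{h_i}`, acting diagonally. -/
noncomputable def pauliZ {n : ℕ} (h : Fin n → ZMod 2) (ψ : QState n) : QState n :=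
  fun x => (-1 : ℂ) ^ (∑ i, (h i * x i).val) * ψ x

/-- The Pauli operator `X^k = ⊗_i X_i^{k_i}`, acting by bit flips. -/
def pauliX {n : ℕ} (k : Fin n → ZMod 2) (ψ : QState n) : QState n :=
  fun x => ψ (x + k)

/-- `σ(A,k) = Σ_{j} k_j (Σ_{i<j} k_i A_{ij})` (as a natural number; only its parity
matters in `(-1)^σ`). -/
def sigmaA {n : ℕ} (A : Matrix (Fin n) (Fin n) (ZMod 2)) (k : Fin n → ZMod 2) : ℕ :=
  ∑ j, ∑ i ∈ univ.filter (· < j), (k j * k i * A i j).val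

/-- The graph state `|G⟩ = Π_{(i,j)∈E} CZ(i,j) H^{⊗n} |0^n⟩` of the graph with
adjacency matrix `A`: each `CZ(i,j)` for an edge `i < j` contributes the phase
`(-1)^{A_{ij} x_i x_j}` on the uniform superposition `H^{⊗n}|0^n⟩`. -/
noncomputable def graphState {n : ℕ} (A : Matrix (Fin n) (Fin n) (ZMod 2)) : QState n :=
  fun x => (∏ j, ∏ i ∈ univ.filter (· < j), (-1 : ℂ) ^ ((A i j * x i * x j).val))
    * (1 / Real.sqrt (2 ^ n))


/-- The inner product `⟨φ|ψ⟩` on the `n`-qubit state space. -/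
noncomputable def ip {n : ℕ} (φ ψ : QState n) : ℂ := ∑ x, (starRingEnd ℂ) (φ x) * ψ x

/-- The graph basis state `|h⟩_G = Z^h |G⟩`. -/
noncomputable def graphBasis {n : ℕ} (A : Matrix (Fin n) (Fin n) (ZMod 2))
    (h : Fin n → ZMod 2) : QState n := pauliZ h (graphState A)

-- === auxiliary definitions and lemmas ===
noncomputable def chi (v : ZMod 2) : ℂ := (-1) ^ v.val

lemma chi_zero : chi 0 = 1 := by norm_num [chi]

lemma chi_add (a b : ZMod 2) : chi (a + b) = chi a * chi b := by
  have h2 : (2 : ZMod 2).val = 0 := rfl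
  have h1 : (1 : ZMod 2).val = 1 := rfl
  rcases (by decide : ∀ x : ZMod 2, x = 0 ∨ x = 1) a with rfl | rfl <;>
    rcases (by decide : ∀ x : ZMod 2, x = 0 ∨ x = 1) b with rfl | rfl <;> norm_num [chi, h1, h2]

lemma chi_sum {ι : Type*} (s : Finset ι) (f : ι → ZMod 2) :
    chi (∑ i ∈ s, f i) = ∏ i ∈ s, chi (f i) := by
  classical
  induction s using Finset.cons_induction with
  | empty => simp [chi_zero]
  | cons a s ha ih => simp [ha, Finset.sum_insert, Finset.prod_insert, chi_add, ih]

lemma chi_conj (v : ZMod 2) : (starRingEnd ℂ) (chi v) = chi v := by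
  simp [chi]

lemma pow_val_sum {ι : Type*} (s : Finset ι) (f : ι → ZMod 2) :
    ((-1 : ℂ)) ^ (∑ i ∈ s, (f i).val) = chi (∑ i ∈ s, f i) := by
  rw [← Finset.prod_pow_eq_pow_sum, chi_sum]
  exact Finset.prod_congr rfl fun i _ => rfl

lemma pow_val_dsum {ι κ : Type*} (s : Finset ι) (t : ι → Finset κ) (f : ι → κ → ZMod 2) :
    ((-1 : ℂ)) ^ (∑ j ∈ s, ∑ i ∈ t j, (f j i).val) = chi (∑ j ∈ s, ∑ i ∈ t j, f j i) := by
  rw [← Finset.prod_pow_eq_pow_sum, chi_sum]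
  exact Finset.prod_congr rfl fun j _ => pow_val_sum _ _

lemma sum_zmod2 (f : ZMod 2 → ℂ) : ∑ b : ZMod 2, f b = f 0 + f 1 := by
  rw [show (univ : Finset (ZMod 2)) = {0, 1} by decide]
  rw [Finset.sum_insert (by decide), Finset.sum_singleton]

lemma sum_chi (a : ZMod 2) : ∑ b : ZMod 2, chi (a * b) = if a = 0 then 2 else 0 := by
  have h1 : (1 : ZMod 2).val = 1 := rfl
  rw [sum_zmod2]
  rcases (by decide : ∀ x : ZMod 2, x = 0 ∨ x = 1) a with rfl | rfl <;> norm_num [chi, h1]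

def dotp {n : ℕ} (a b : Fin n → ZMod 2) : ZMod 2 := ∑ i, a i * b i

def Qf {n : ℕ} (A : Matrix (Fin n) (Fin n) (ZMod 2)) (x : Fin n → ZMod 2) : ZMod 2 :=
  ∑ j, ∑ i ∈ univ.filter (· < j), A i j * x i * x j

lemma sum_split {n : ℕ} (f : Fin n → Fin n → ZMod 2) (hd : ∀ i, f i i = 0) :
    ∑ i, ∑ j, f i j = ∑ j, ∑ i ∈ univ.filter (· < j), (f i j + f j i) := by
  have key : ∀ i j : Fin n, f i j
      = (if i < j then f i j else 0) + (if j < i then f i j else 0) := by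
    intro i j
    rcases lt_trichotomy i j with hlt | heq | hgt
    · simp [hlt, not_lt_of_gt hlt]
    · subst heq; simp [hd]
    · simp [hgt, not_lt_of_gt hgt]
  calc ∑ i, ∑ j, f i j
      = ∑ i, ∑ j, ((if i < j then f i j else 0) + (if j < i then f i j else 0)) := by
        simp_rw [← key]
    _ = (∑ i, ∑ j, if i < j then f i j else 0) + ∑ i, ∑ j, if j < i then f i j else 0 := by
        simp [Finset.sum_add_distrib]
    _ = (∑ j, ∑ i, if i < j then f i j else 0) + ∑ j, ∑ i, if i < j then f j i else 0 := by
        rw [Finset.sum_comm]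
    _ = ∑ j, ∑ i ∈ univ.filter (· < j), (f i j + f j i) := by
        rw [← Finset.sum_add_distrib]
        refine Finset.sum_congr rfl fun j _ => ?_
        rw [← Finset.sum_add_distrib, Finset.sum_filter]
        refine Finset.sum_congr rfl fun i _ => ?_
        by_cases hij : i < j <;> simp [hij]

lemma dot_add_left {n : ℕ} (a b x : Fin n → ZMod 2) :
    dotp (a + b) x = dotp a x + dotp b x := by
  simp [dotp, add_mul, Finset.sum_add_distrib]

lemma dot_add_right {n : ℕ} (a x y : Fin n → ZMod 2) :
    dotp a (x + y) = dotp a x + dotp a y := by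
  simp [dotp, mul_add, Finset.sum_add_distrib]

lemma Q_add {n : ℕ} (A : Matrix (Fin n) (Fin n) (ZMod 2)) (x y : Fin n → ZMod 2) :
    Qf A (x + y) = Qf A x
      + (∑ j, ∑ i ∈ univ.filter (· < j), (A i j * x i * y j + A i j * y i * x j))
      + Qf A y := by
  simp only [Qf, ← Finset.sum_add_distrib]
  refine Finset.sum_congr rfl fun j _ => Finset.sum_congr rfl fun i _ => ?_
  simp only [Pi.add_apply]; ring

lemma mulVec_dot {n : ℕ} (A : Matrix (Fin n) (Fin n) (ZMod 2)) (hsymm : A.IsSymm)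
    (hdiag : ∀ i, A i i = 0) (k x : Fin n → ZMod 2) :
    dotp (A.mulVec k) x
      = ∑ j, ∑ i ∈ univ.filter (· < j), (A i j * x i * k j + A i j * k i * x j) := by
  have h1 : dotp (A.mulVec k) x = ∑ i, ∑ j, A i j * k j * x i := by
    simp [dotp, Matrix.mulVec, dotProduct, Finset.sum_mul]
  rw [h1, sum_split (fun i j => A i j * k j * x i) (fun i => by simp [hdiag i])]
  refine Finset.sum_congr rfl fun j _ => Finset.sum_congr rfl fun i _ => ?_
  rw [hsymm.apply j i]
  ring

lemma dot_mulVec_self {n : ℕ} (A : Matrix (Fin n) (Fin n) (ZMod 2)) (hsymm : A.IsSymm)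
    (hdiag : ∀ i, A i i = 0) (k : Fin n → ZMod 2) :
    dotp (A.mulVec k) k = 0 := by
  rw [mulVec_dot A hsymm hdiag k k]
  refine Finset.sum_eq_zero fun j _ => Finset.sum_eq_zero fun i _ => ?_
  ring_nf
  rw [show (2 : ZMod 2) = 0 by decide]
  ring

-- graph state as character
lemma graphState_chi {n : ℕ} (A : Matrix (Fin n) (Fin n) (ZMod 2)) (x : Fin n → ZMod 2) :
    graphState A x = chi (Qf A x) * (1 / (Real.sqrt (2 ^ n) : ℂ)) := by
  unfold graphState Qf
  rw [chi_sum]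
  congr 1
  refine Finset.prod_congr rfl fun j _ => ?_
  rw [chi_sum]
  exact Finset.prod_congr rfl fun i _ => rfl

lemma graphBasis_chi {n : ℕ} (A : Matrix (Fin n) (Fin n) (ZMod 2)) (h x : Fin n → ZMod 2) :
    graphBasis A h x = chi (dotp h x) * chi (Qf A x) * (1 / (Real.sqrt (2 ^ n) : ℂ)) := by
  unfold graphBasis pauliZ
  rw [pow_val_sum, graphState_chi]
  show chi (dotp h x) * (chi (Qf A x) * _) = _
  ring

lemma htwo (a : ZMod 2) : a * 2 = 0 := by fin_cases a <;> decide

/-- For an `n`-vertex graph with adjacency matrix `A` and bitstrings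
`h, g, k, l ∈ {0,1}^n`, the matrix element `⟨h| X^k Z^l |g⟩` between graph basis
states equals `(-1)^{h·k + σ(A,k)}` if `A·k + l = h + g` over `ZMod 2`, and `0`
otherwise. -/
theorem stmt3 {n : ℕ} (A : Matrix (Fin n) (Fin n) (ZMod 2))
    (hsymm : A.IsSymm) (hdiag : ∀ i, A i i = 0) (h g k l : Fin n → ZMod 2) :
    ip (graphBasis A h) (pauliX k (pauliZ l (graphBasis A g))) =
      if A.mulVec k + l = h + g
      then (-1 : ℂ) ^ ((∑ i, (h i * k i).val) + sigmaA A k) else 0 := by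
  classical
  set c : ℂ := 1 / (Real.sqrt (2 ^ n) : ℂ) with hcdef
  set v : Fin n → ZMod 2 := h + g + l + A.mulVec k with hv
  set C : ZMod 2 := dotp l k + dotp g k + Qf A k with hC
  -- summand formula
  have key : ∀ x : Fin n → ZMod 2,
      (starRingEnd ℂ) (graphBasis A h x) * pauliX k (pauliZ l (graphBasis A g)) x
        = chi (dotp v x + C) * (c * c) := by
    intro x
    have hE : dotp h x + Qf A x + (dotp l (x + k) + (dotp g (x + k) + Qf A (x + k)))
        = dotp v x + C := by
      rw [dot_add_right l x k, dot_add_right g x k, Q_add,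
        ← mulVec_dot A hsymm hdiag k x, hv, hC]
      rw [dot_add_left, dot_add_left, dot_add_left]
      linear_combination htwo (Qf A x)
    rw [← hE]
    unfold pauliX pauliZ
    rw [graphBasis_chi, graphBasis_chi, pow_val_sum]
    rw [show (∑ i, l i * (x + k) i) = dotp l (x + k) from rfl]
    simp only [map_mul, chi_conj, map_div₀, map_one, Complex.conj_ofReal]
    simp only [chi_add]
    show chi (dotp h x) * chi (Qf A x) * c *
        (chi (dotp l (x + k)) * (chi (dotp g (x + k)) * chi (Qf A (x + k)) * c)) = _
    ring
  unfold ip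
  simp only [key]
  -- factor out constants
  have hfactor : ∑ x : Fin n → ZMod 2, chi (dotp v x + C) * (c * c)
      = (chi C * (c * c)) * ∑ x : Fin n → ZMod 2, chi (dotp v x) := by
    rw [Finset.mul_sum]
    refine Finset.sum_congr rfl fun x _ => ?_
    rw [chi_add]; ring
  rw [hfactor]
  -- orthogonality
  have horth : ∑ x : Fin n → ZMod 2, chi (dotp v x)
      = ∏ i, (if v i = 0 then (2 : ℂ) else 0) := by
    have h1 : ∀ x : Fin n → ZMod 2, chi (dotp v x) = ∏ i, chi (v i * x i) := by
      intro x; rw [dotp, chi_sum]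
    simp only [h1]
    have h2 := Finset.sum_prod_piFinset (ι := Fin n) univ (fun i b => chi (v i * b))
    rw [Fintype.piFinset_univ] at h2
    rw [h2]
    exact Finset.prod_congr rfl fun i _ => sum_chi (v i)
  rw [horth]
  by_cases hcond : A.mulVec k + l = h + g
  · rw [if_pos hcond]
    have hv0 : v = 0 := by
      funext i
      have := congrFun hcond i
      simp only [Pi.add_apply] at this
      simp only [hv, Pi.add_apply, Pi.zero_apply]
      linear_combination this + htwo (h i) + htwo (g i)
    rw [hv0]
    simp only [Pi.zero_apply, if_pos rfl, Finset.prod_const, Finset.card_univ,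
      Fintype.card_fin]
    -- normalization : chi C * (c*c) * 2^n = RHS
    have hcc : c * c * (2 : ℂ) ^ n = 1 := by
      have hpos : (0 : ℝ) ≤ 2 ^ n := by positivity
      have hs : (Real.sqrt (2 ^ n) : ℂ) * (Real.sqrt (2 ^ n) : ℂ) = (2 : ℂ) ^ n := by
        rw [← Complex.ofReal_mul, Real.mul_self_sqrt hpos]
        push_cast; ring
      have hne : ((2 : ℂ)) ^ n ≠ 0 := pow_ne_zero _ two_ne_zero
      rw [hcdef, div_mul_div_comm, one_mul, hs]
      exact one_div_mul_cancel hne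
    -- phase
    have hl : l = h + g + A.mulVec k := by
      funext i
      have := congrFun hcond i
      simp only [Pi.add_apply] at this ⊢
      linear_combination this - htwo (A.mulVec k i)
    have hCval : C = dotp h k + Qf A k := by
      rw [hC, hl, dot_add_left, dot_add_left, dot_mulVec_self A hsymm hdiag]
      linear_combination htwo (dotp g k)
    have hRHS : (-1 : ℂ) ^ ((∑ i, (h i * k i).val) + sigmaA A k) = chi C := by
      rw [pow_add, pow_val_sum,
        show sigmaA A k = ∑ j, ∑ i ∈ univ.filter (· < j), (k j * k i * A i j).val from rfl,
        pow_val_dsum]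
      have e2 : (∑ j, ∑ i ∈ univ.filter (· < j), k j * k i * A i j) = Qf A k := by
        refine Finset.sum_congr rfl fun j _ => Finset.sum_congr rfl fun i _ => ?_
        ring
      rw [e2, hCval, chi_add]
      rfl
    rw [hRHS]
    calc chi C * (c * c) * (2 : ℂ) ^ n
        = chi C * (c * c * (2 : ℂ) ^ n) := by ring
      _ = chi C := by rw [hcc, mul_one]
  · rw [if_neg hcond]
    have hvne : v ≠ 0 := by
      intro hv0
      apply hcond
      funext i
      have := congrFun hv0 i
      simp only [hv, Pi.add_apply, Pi.zero_apply] at this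
      simp only [Pi.add_apply]
      linear_combination this - htwo (h i) - htwo (g i)
    obtain ⟨i, hi⟩ := Function.ne_iff.mp hvne
    rw [Finset.prod_eq_zero (Finset.mem_univ i)]
    · ring
    · simp only [Pi.zero_apply] at hi
      rw [if_neg hi]
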